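/- Let p be a prime, let j ≥ 2 be an integer with p not dividing j and p not dividing j − 1, and let k be a positive integer. Then the polynomial φ_j(X,X,Z) ∈ F_p[X,Z] is not divisible by X − Z, and φ_j(X,X,Z) and φ_{p^k+1}(X,X,Z) are coprime in F_p[X,Z]. -/

import Mathlib

open MvPolynomial

lemma phi_key (p n : ℕ) (φ : MvPolynomial (Fin 3) (ZMod p))
    (hφ : (X 0 - X 1) * (X 0 - X 2) * φ =
      X 0 ^ n - X 1 ^ n - X 2 ^ n + (-X 0 + X 1 + X 2) ^ n) :
    (X 0 - X 1) * (aeval ![X 0, X 0, X 1] φ : MvPolynomial (Fin 2) (ZMod p)) =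
      (n : MvPolynomial (Fin 2) (ZMod p)) * (X 0 ^ (n-1) - X 1 ^ (n-1)) := by
  have h := congrArg (fun q => (aeval ![X 0, X 0, X 1] :
    MvPolynomial (Fin 3) (ZMod p) →ₐ[ZMod p] MvPolynomial (Fin 2) (ZMod p)) (pderiv 1 q)) hφ
  simp only [pderiv_mul, pderiv_pow, map_sub, map_add, map_neg, pderiv_X, map_mul, map_pow,
    map_smul, aeval_X, aeval_eq_bind₁] at h
  simp [Matrix.cons_val_one, Matrix.head_cons, Pi.single_apply] at h
  rw [aeval_eq_bind₁]
  linear_combination -h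

lemma phi_prime_sub (p : ℕ) (hp : p.Prime) :
    Prime ((X 0 - X 1 : MvPolynomial (Fin 2) (ZMod p))) := by
  haveI := Fact.mk hp
  rw [← MulEquiv.prime_iff (finSuccEquiv (ZMod p) 1).toMulEquiv]
  have : (finSuccEquiv (ZMod p) 1).toMulEquiv (X 0 - X 1) =
      Polynomial.X - Polynomial.C (X 0) := by
    show (finSuccEquiv (ZMod p) 1) (X 0 - X 1) = _
    rw [map_sub, finSuccEquiv_X_zero, show (1 : Fin 2) = (0 : Fin 1).succ from rfl,
      finSuccEquiv_X_succ]
  rw [this]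
  exact Polynomial.prime_X_sub_C _

theorem phi_specializations_coprime
    (p : ℕ) (hp : p.Prime) (j k : ℕ) (hj : 2 ≤ j)
    (hpj : ¬ p ∣ j) (hpj1 : ¬ p ∣ (j - 1)) (hk : 0 < k)
    (φj φpk : MvPolynomial (Fin 3) (ZMod p))
    (hφj : (X 0 - X 1) * (X 0 - X 2) * φj =
      X 0 ^ j - X 1 ^ j - X 2 ^ j + (-X 0 + X 1 + X 2) ^ j)
    (hφpk : (X 0 - X 1) * (X 0 - X 2) * φpk =
      X 0 ^ (p ^ k + 1) - X 1 ^ (p ^ k + 1) - X 2 ^ (p ^ k + 1) +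
        (-X 0 + X 1 + X 2) ^ (p ^ k + 1)) :
    ¬ (X 0 - X 1) ∣ (aeval ![X 0, X 0, X 1] φj : MvPolynomial (Fin 2) (ZMod p)) ∧
      ∀ g : MvPolynomial (Fin 2) (ZMod p),
        g ∣ aeval ![X 0, X 0, X 1] φj → g ∣ aeval ![X 0, X 0, X 1] φpk → IsUnit g := by
  haveI := Fact.mk hp
  set A : MvPolynomial (Fin 2) (ZMod p) := X 0 - X 1 with hA
  set Fj : MvPolynomial (Fin 2) (ZMod p) := aeval ![X 0, X 0, X 1] φj with hFj
  set Fpk : MvPolynomial (Fin 2) (ZMod p) := aeval ![X 0, X 0, X 1] φpk with hFpk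
  have hAne : A ≠ 0 := by
    intro h
    have := congrArg (eval ![(1 : ZMod p), 0]) h
    simp [hA] at this
  have hkey1 := phi_key p j φj hφj
  have hkey2 := phi_key p (p ^ k + 1) φpk hφpk
  -- Fpk = A ^ (p ^ k - 1)
  have hcast : ((p ^ k + 1 : ℕ) : MvPolynomial (Fin 2) (ZMod p)) = 1 := by
    push_cast
    rw [CharP.cast_eq_zero (MvPolynomial (Fin 2) (ZMod p)) p]
    simp [zero_pow hk.ne']
  have hFpkA : Fpk = A ^ (p ^ k - 1) := by
    have h1 : A * Fpk = A ^ (p ^ k) := by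
      rw [hkey2, hcast, one_mul, Nat.add_sub_cancel, ← sub_pow_char_pow]
    have h2 : A ^ (p ^ k) = A * A ^ (p ^ k - 1) := by
      rw [← pow_succ']
      congr 1
      have : 1 ≤ p ^ k := Nat.one_le_pow _ _ hp.pos
      omega
    exact mul_left_cancel₀ hAne (h1.trans h2)
  -- Fj = j * Sj
  set Sj : MvPolynomial (Fin 2) (ZMod p) :=
    ∑ i ∈ Finset.range (j - 1), X 0 ^ i * X 1 ^ (j - 1 - 1 - i) with hSj
  have hFjS : Fj = (j : MvPolynomial (Fin 2) (ZMod p)) * Sj := by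
    apply mul_left_cancel₀ hAne
    rw [hkey1]
    have := geom_sum₂_mul (X 0 : MvPolynomial (Fin 2) (ZMod p)) (X 1) (j - 1)
    rw [← this, ← hSj, ← hA]
    ring
  -- A does not divide Fj
  have hnd : ¬ A ∣ Fj := by
    intro ⟨t, ht⟩
    set ρ : MvPolynomial (Fin 2) (ZMod p) →ₐ[ZMod p] Polynomial (ZMod p) :=
      aeval ![Polynomial.X, Polynomial.X] with hρ
    have hρA : ρ A = 0 := by simp [hA, hρ]
    have hρFj : ρ Fj = 0 := by rw [ht, map_mul, hρA, zero_mul]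
    rw [hFjS, map_mul, map_natCast, hSj, map_sum] at hρFj
    have hsum : ∀ i ∈ Finset.range (j - 1),
        ρ (X 0 ^ i * X 1 ^ (j - 1 - 1 - i)) = Polynomial.X ^ (j - 2) := by
      intro i hi
      simp only [Finset.mem_range] at hi
      rw [map_mul, map_pow, map_pow, hρ]
      simp only [aeval_X, Matrix.cons_val_zero, Matrix.cons_val_one, Matrix.head_cons]
      rw [← pow_add]
      congr 1
      omega
    rw [Finset.sum_congr rfl hsum, Finset.sum_const, Finset.card_range, nsmul_eq_mul] at hρFj
    have hj0 : ((j : ZMod p)) ≠ 0 := by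
      rw [Ne, ZMod.natCast_eq_zero_iff]; exact hpj
    have hj10 : (((j - 1 : ℕ) : ZMod p)) ≠ 0 := by
      rw [Ne, ZMod.natCast_eq_zero_iff]; exact hpj1
    have : ((j : Polynomial (ZMod p)) * (((j - 1 : ℕ) : Polynomial (ZMod p)) * Polynomial.X ^ (j - 2))) ≠ 0 := by
      rw [← Polynomial.C_eq_natCast, ← Polynomial.C_eq_natCast]
      refine mul_ne_zero (Polynomial.C_ne_zero.mpr hj0)
        (mul_ne_zero (Polynomial.C_ne_zero.mpr hj10) (pow_ne_zero _ Polynomial.X_ne_zero))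
    exact this hρFj
  refine ⟨hnd, fun g hg1 hg2 => ?_⟩
  have hApr : Prime A := phi_prime_sub p hp
  rw [hFpkA] at hg2
  obtain ⟨i, hi, hassoc⟩ := (dvd_prime_pow hApr _).mp hg2
  rcases Nat.eq_zero_or_pos i with rfl | hipos
  · rw [pow_zero] at hassoc
    exact associated_one_iff_isUnit.mp hassoc
  · exfalso
    apply hnd
    have : A ∣ g := dvd_trans (dvd_pow_self A hipos.ne') hassoc.symm.dvd
    exact this.trans hg1
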